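/- arXiv:0902.1834 — 2 statements merged into one kernel-verified Lean document; each statement's English description precedes it below -/
import Mathlib

section
/- In any configuration of 4 robots on a ring of n nodes, if the configuration contains an arrow then the arrow is unique, and the size of any arrow is at least 1 and at most n - 4. -/
/-- An arrow of size `x` with tail at node `i`: the tail is occupied by one robot, the `x`
following nodes are free, then a tower of 2 robots, then the head occupied by one robot;
maximality: the node just before the tail is free. -/
def ArrowAt (n : ℕ) (f : ZMod n → ℕ) (i : ZMod n) (x : ℕ) : Prop :=
  1 ≤ x ∧ f (i - 1) = 0 ∧ f i = 1 ∧
  (∀ j : ℕ, 1 ≤ j → j ≤ x → f (i + (j : ZMod n)) = 0) ∧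
  f (i + ((x + 1 : ℕ) : ZMod n)) = 2 ∧ f (i + ((x + 2 : ℕ) : ZMod n)) = 1

lemma arrow_key (n : ℕ) [NeZero n] (hn : 5 ≤ n) (f : ZMod n → ℕ)
    (hsum : ∑ v : ZMod n, f v = 4) (i : ZMod n) (x : ℕ) (ha : ArrowAt n f i x) :
    x ≤ n - 4 ∧ ∀ v : ZMod n, v ≠ i → v ≠ i + ((x + 1 : ℕ) : ZMod n) →
      v ≠ i + ((x + 2 : ℕ) : ZMod n) → f v = 0 := by
  obtain ⟨hx1, hm, hi, hfree, ht, hh⟩ := ha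
  set t : ZMod n := i + ((x + 1 : ℕ) : ZMod n) with htdef
  set h : ZMod n := i + ((x + 2 : ℕ) : ZMod n) with hhdef
  have hnpos : 0 < n := Nat.pos_of_ne_zero (NeZero.ne n)
  have hht : h = t + 1 := by
    rw [htdef, hhdef]
    push_cast
    ring
  -- x+2 is not divisible by n
  have hndvd : ¬ n ∣ x + 2 := by
    intro hdvd
    have h0 : ((x + 2 : ℕ) : ZMod n) = 0 := (ZMod.natCast_eq_zero_iff _ _).mpr hdvd
    have h1 : t = i - 1 := by
      rw [htdef]
      have : ((x + 1 : ℕ) : ZMod n) = ((x + 2 : ℕ) : ZMod n) - 1 := by push_cast; ring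
      rw [this, h0]; ring
    rw [h1, hm] at ht
    simp at ht
  -- the bound
  have hbound : x ≤ n - 4 := by
    by_contra hx
    have hx3 : n - 3 ≤ x := by omega
    rcases eq_or_lt_of_le hx3 with hxe | hxl
    · -- x = n - 3, so x + 2 = n - 1 and h = i - 1
      have hcast : ((x + 2 : ℕ) : ZMod n) = -1 := by
        have : ((x + 2 : ℕ) : ZMod n) + 1 = ((n : ℕ) : ZMod n) := by
          push_cast
          have : (x : ℕ) + 2 + 1 = n := by omega
          exact_mod_cast congrArg (Nat.cast : ℕ → ZMod n) this
        rw [ZMod.natCast_self] at this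
        linear_combination this
      have h1 : h = i - 1 := by rw [hhdef, hcast]; ring
      rw [h1, hm] at hh
      simp at hh
    · -- x ≥ n - 2
      set r : ℕ := (x + 1) % n with hrdef
      have hrcast : ((x + 1 : ℕ) : ZMod n) = ((r : ℕ) : ZMod n) := (ZMod.natCast_mod _ _).symm
      have hrlt : r < n := Nat.mod_lt _ hnpos
      have hdm := Nat.div_add_mod (x + 1) n
      rcases Nat.eq_zero_or_pos r with hr0 | hrpos
      · -- t = i
        have h1 : t = i := by rw [htdef, hrcast, hr0]; simp
        rw [h1, hi] at ht
        simp at ht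
      · have hrne : r ≠ n - 1 := by
          intro hre
          apply hndvd
          refine ⟨(x + 1) / n + 1, ?_⟩
          rw [Nat.mul_add, Nat.mul_one]
          omega
        have hrle : r ≤ x := by omega
        have h1 : t = i + ((r : ℕ) : ZMod n) := by rw [htdef, hrcast]
        rw [h1, hfree r hrpos hrle] at ht
        simp at ht
  -- distinctness
  have hih : i ≠ h := by
    intro he
    apply hndvd
    have : ((x + 2 : ℕ) : ZMod n) = 0 := by
      have := he.symm
      rw [hhdef] at this
      exact (add_eq_left).mp this
    exact (ZMod.natCast_eq_zero_iff _ _).mp this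
  have hit : i ≠ t := fun he => by rw [← he, hi] at ht; simp at ht
  have hth : t ≠ h := fun he => by rw [← he, ht] at hh; simp at hh
  refine ⟨hbound, ?_⟩
  classical
  set s : Finset (ZMod n) := {i, t, h} with hsdef
  have hsum_s : ∑ v ∈ s, f v = 4 := by
    rw [hsdef, Finset.sum_insert (by simp [hit, hih]),
      Finset.sum_insert (by simp [hth]), Finset.sum_singleton, hi, ht, hh]
    norm_num
  have hsd : ∑ v ∈ Finset.univ \ s, f v + ∑ v ∈ s, f v = ∑ v : ZMod n, f v :=
    Finset.sum_sdiff (Finset.subset_univ s)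
  have hzero : ∑ v ∈ Finset.univ \ s, f v = 0 := by omega
  intro v hv1 hv2 hv3
  refine (Finset.sum_eq_zero_iff.mp hzero) v ?_
  simp [hsdef, hv1, hv2, hv3]

/-- in any configuration of 4 robots on an `n`-ring, an arrow has size between
`1` and `n - 4`, and if the configuration contains an arrow then the arrow is unique. -/
theorem stmt6 (n : ℕ) [NeZero n] (hn : 5 ≤ n) (f : ZMod n → ℕ)
    (hsum : ∑ v : ZMod n, f v = 4) :
    (∀ i x, ArrowAt n f i x → 1 ≤ x ∧ x ≤ n - 4) ∧
    (∀ i x i' x', ArrowAt n f i x → ArrowAt n f i' x' → i = i' ∧ x = x') := by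
  constructor
  · intro i x ha
    exact ⟨ha.1, (arrow_key n hn f hsum i x ha).1⟩
  · intro i x i' x' ha ha'
    obtain ⟨hb, hz⟩ := arrow_key n hn f hsum i x ha
    obtain ⟨hb', hz'⟩ := arrow_key n hn f hsum i' x' ha'
    obtain ⟨hx1, hm, hi, hfree, ht, hh⟩ := ha
    obtain ⟨hx1', hm', hi', hfree', ht', hh'⟩ := ha'
    set t : ZMod n := i + ((x + 1 : ℕ) : ZMod n) with htdef
    set h : ZMod n := i + ((x + 2 : ℕ) : ZMod n) with hhdef
    have hht : h = t + 1 := by rw [htdef, hhdef]; push_cast; ring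
    -- i' ∈ {i, t, h}
    have hii' : i = i' := by
      by_contra hne
      have h1 : i' ≠ i := fun e => hne e.symm
      have h2 : i' ≠ t := fun e => by rw [e, ht] at hi'; simp at hi'
      have h3 : i' ≠ h := by
        intro e
        have : i' - 1 = t := by rw [e, hht]; ring
        rw [this, ht] at hm'
        simp at hm'
      rw [hz i' h1 h2 h3] at hi'
      simp at hi'
    subst hii'
    refine ⟨rfl, ?_⟩
    -- tower node equal
    set t' : ZMod n := i + ((x' + 1 : ℕ) : ZMod n) with htdef'
    have h1 : t' ≠ i := fun e => by rw [e, hi] at ht'; simp at ht'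
    have h3 : t' ≠ h := fun e => by rw [e, hh] at ht'; simp at ht'
    have h2 : t' = t := by
      by_contra hne
      rw [hz t' h1 hne h3] at ht'
      simp at ht'
    rw [htdef', htdef] at h2
    have hc : ((x' + 1 : ℕ) : ZMod n) = ((x + 1 : ℕ) : ZMod n) := by
      exact add_left_cancel h2
    have hv := congrArg ZMod.val hc
    rw [ZMod.val_cast_of_lt (by omega), ZMod.val_cast_of_lt (by omega)] at hv
    omega
end

section
/- Starting from an arrow of size x (1 ≤ x < n - 4) on a ring of n nodes, moving the robot at the arrow tail one step through the hole separating the tail from the arrow head yields a configuration containing an arrow of size x + 1. -/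
/-- moving the tail robot of a non-final arrow of size `x` one step through the
hole separating the tail from the head yields an arrow of size `x + 1`. -/
theorem stmt10 (n : ℕ) [NeZero n] (hn : 6 ≤ n) (f : ZMod n → ℕ)
    (hsum : ∑ v : ZMod n, f v = 4) (i : ZMod n) (x : ℕ)
    (hx : 1 ≤ x) (hxn : x + 1 ≤ n - 4)
    (harrow : ArrowAt n f i x)
    (g : ZMod n → ℕ)
    (hg : ∀ v, g v = if v = i then f v - 1 else if v = i - 1 then f v + 1 else f v) :
    ArrowAt n g (i - 1) (x + 1) := by
  obtain ⟨hx', h0, h1, hfree, h2, h3⟩ := harrow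
  have hxn5 : x + 5 ≤ n := by omega
  have hinj : ∀ p q : ℕ, p < n → q < n → ((p : ZMod n) = q) → p = q := by
    intro p q hp hq h
    have := congrArg ZMod.val h
    rwa [ZMod.val_cast_of_lt hp, ZMod.val_cast_of_lt hq] at this
  have hij : ∀ p q : ℕ, p < n → q < n → i + (p : ZMod n) = i + (q : ZMod n) → p = q :=
    fun p q hp hq h => hinj p q hp hq (add_left_cancel h)
  have e1 : i - 1 = i + ((n - 1 : ℕ) : ZMod n) := by
    rw [Nat.cast_sub (by omega), ZMod.natCast_self]; push_cast; ring
  have e2 : i - 2 = i + ((n - 2 : ℕ) : ZMod n) := by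
    rw [Nat.cast_sub (by omega), ZMod.natCast_self]; push_cast; ring
  -- distinctness of the three occupied nodes
  have hia : i ≠ i + ((x + 1 : ℕ) : ZMod n) := by
    intro h
    have : (0 : ℕ) = x + 1 := hij 0 (x + 1) (by omega) (by omega) (by simpa using h)
    omega
  have hib : i ≠ i + ((x + 2 : ℕ) : ZMod n) := by
    intro h
    have : (0 : ℕ) = x + 2 := hij 0 (x + 2) (by omega) (by omega) (by simpa using h)
    omega
  have hab : i + ((x + 1 : ℕ) : ZMod n) ≠ i + ((x + 2 : ℕ) : ZMod n) := by
    intro h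
    have : x + 1 = x + 2 := hij (x + 1) (x + 2) (by omega) (by omega) h
    omega
  -- the sum over the three occupied nodes is 4
  set s : Finset (ZMod n) :=
    {i, i + ((x + 1 : ℕ) : ZMod n), i + ((x + 2 : ℕ) : ZMod n)} with hs
  have hsums : ∑ v ∈ s, f v = 4 := by
    have hmem : i ∉ ({i + ((x + 1 : ℕ) : ZMod n), i + ((x + 2 : ℕ) : ZMod n)} :
        Finset (ZMod n)) := by
      simp only [Finset.mem_insert, Finset.mem_singleton]
      push_neg
      exact ⟨hia, hib⟩
    rw [hs, Finset.sum_insert hmem, Finset.sum_pair hab, h1, h2, h3]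
    norm_num
  have hcompl : ∑ v ∈ sᶜ, f v = 0 := by
    have h := Finset.sum_add_sum_compl s f
    rw [hsums, hsum] at h
    omega
  have hzero : ∀ v ∈ sᶜ, f v = 0 := Finset.sum_eq_zero_iff.mp hcompl
  -- facts about i - 2
  have h20 : i - 2 ≠ i := by
    rw [e2]; intro h
    have : n - 2 = 0 := hij (n - 2) 0 (by omega) (by omega) (by simpa using h)
    omega
  have h21 : i - 2 ≠ i - 1 := by
    rw [e1, e2]; intro h
    have : n - 2 = n - 1 := hij (n - 2) (n - 1) (by omega) (by omega) h
    omega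
  have h2a : i - 2 ≠ i + ((x + 1 : ℕ) : ZMod n) := by
    rw [e2]; intro h
    have : n - 2 = x + 1 := hij (n - 2) (x + 1) (by omega) (by omega) h
    omega
  have h2b : i - 2 ≠ i + ((x + 2 : ℕ) : ZMod n) := by
    rw [e2]; intro h
    have : n - 2 = x + 2 := hij (n - 2) (x + 2) (by omega) (by omega) h
    omega
  have hf2 : f (i - 2) = 0 := by
    apply hzero
    simp only [hs, Finset.mem_compl, Finset.mem_insert, Finset.mem_singleton]
    push_neg
    exact ⟨h20, h2a, h2b⟩
  have h10 : i - 1 ≠ i := by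
    rw [e1]; intro h
    have : n - 1 = 0 := hij (n - 1) 0 (by omega) (by omega) (by simpa using h)
    omega
  refine ⟨by omega, ?_, ?_, ?_, ?_, ?_⟩
  · -- node before the new tail is free
    have e : (i - 1 - 1 : ZMod n) = i - 2 := by ring
    rw [e, hg, if_neg h20, if_neg h21]
    exact hf2
  · -- new tail occupied by one robot
    rw [hg, if_neg h10, if_pos rfl, h0]
  · -- the x+1 intermediate nodes are free
    intro j hj1 hj2
    rcases Nat.eq_or_lt_of_le hj1 with hj | hj
    · -- j = 1 : the node is i, whose robot moved away
      have e : i - 1 + ((j : ℕ) : ZMod n) = i := by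
        rw [← hj]; push_cast; ring
      rw [e, hg, if_pos rfl, h1]
    · -- j ≥ 2 : the node is i + (j-1), free in the old arrow
      have ej : i - 1 + ((j : ℕ) : ZMod n) = i + ((j - 1 : ℕ) : ZMod n) := by
        rw [Nat.cast_sub (by omega)]; push_cast; ring
      have hne1 : i + ((j - 1 : ℕ) : ZMod n) ≠ i := by
        intro h
        have : j - 1 = 0 := hij (j - 1) 0 (by omega) (by omega) (by simpa using h)
        omega
      have hne2 : i + ((j - 1 : ℕ) : ZMod n) ≠ i - 1 := by
        rw [e1]; intro h
        have : j - 1 = n - 1 := hij (j - 1) (n - 1) (by omega) (by omega) h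
        omega
      rw [ej, hg, if_neg hne1, if_neg hne2]
      exact hfree (j - 1) (by omega) (by omega)
  · -- tower of two robots
    have e : i - 1 + ((x + 1 + 1 : ℕ) : ZMod n) = i + ((x + 1 : ℕ) : ZMod n) := by
      push_cast; ring
    rw [e, hg, if_neg (Ne.symm hia), if_neg ?_]
    · exact h2
    · rw [e1]; intro h
      have : x + 1 = n - 1 := hij (x + 1) (n - 1) (by omega) (by omega) h
      omega
  · -- head
    have e : i - 1 + ((x + 1 + 2 : ℕ) : ZMod n) = i + ((x + 2 : ℕ) : ZMod n) := by
      push_cast; ring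
    rw [e, hg, if_neg (Ne.symm hib), if_neg ?_]
    · exact h3
    · rw [e1]; intro h
      have : x + 2 = n - 1 := hij (x + 2) (n - 1) (by omega) (by omega) h
      omega
end
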